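/- Let μ ∈ ℝ, 0 < β₊ < 1, 0 < β₋ < 1, α₊ ≥ 0, α₋ ≥ 0 with α₊ + α₋ > 0, λ₊ > 0, λ₋ > 0, and let Ψ be the GTS characteristic exponent Ψ(ξ) = iμξ + α₊·Γ(−β₊)·((λ₊ − iξ)^{β₊} − λ₊^{β₊}) + α₋·Γ(−β₋)·((λ₋ + iξ)^{β₋} − λ₋^{β₋}). Set κ₁ = μ + α₊·Γ(1−β₊)/λ₊^{1−β₊} − α₋·Γ(1−β₋)/λ₋^{1−β₋} and κ₂ = α₊·Γ(2−β₊)/λ₊^{2−β₊} + α₋·Γ(2−β₋)/λ₋^{2−β₋} (so κ₂ > 0). Then for every real ξ, lim_{t → ∞} [ t·Ψ(ξ/√(t·κ₂)) − i·t·κ₁·ξ/√(t·κ₂) ] = −ξ²/2; consequently lim_{t → ∞} exp( t·Ψ(ξ/√(t·κ₂)) − i·t·κ₁·ξ/√(t·κ₂) ) = exp(−ξ²/2), i.e. the characteristic function of the standardized GTS Lévy process converges pointwise to the characteristic function of the standard normal distribution. -/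

import Mathlib

open Filter Asymptotics Complex

lemma gts_taylor2 (f g : ℝ → ℂ) (a : ℂ)
    (hf : ∀ x, HasDerivAt f (g x) x)
    (hg : HasDerivAt g a 0) :
    Filter.Tendsto (fun s : ℝ => (f s - f 0 - g 0 * s) / (s : ℂ) ^ 2)
      (nhdsWithin 0 {(0:ℝ)}ᶜ) (nhds (a / 2)) := by
  set φ : ℝ → ℂ := fun u => f u - f 0 - g 0 * u - a / 2 * u ^ 2 with hφ
  have hφd : ∀ u : ℝ, HasDerivAt φ (g u - g 0 - a * u) u := by
    intro u
    have h1 : HasDerivAt (fun u : ℝ => g 0 * (u : ℂ)) (g 0) u := by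
      simpa using (Complex.ofRealCLM.hasDerivAt (x := u)).const_mul (g 0)
    have h2 : HasDerivAt (fun u : ℝ => a / 2 * (u : ℂ) ^ 2) (a * u) u := by
      have : HasDerivAt (fun u : ℝ => ((u : ℂ)) ^ 2) (2 * u) u := by
        simpa using ((hasDerivAt_pow 2 (u : ℂ)).comp_ofReal (z := u))
      have := this.const_mul (a / 2)
      exact this.congr_deriv (by ring)
    exact (((hf u).sub_const (f 0)).sub h1).sub h2
  have key : (fun s : ℝ => φ s) =o[nhds 0] (fun s : ℝ => s ^ 2) := by
    rw [Asymptotics.isLittleO_iff]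
    intro ε hε
    have h1 : (fun u : ℝ => g u - g 0 - (u : ℝ) • a) =o[nhds 0] (fun u : ℝ => u - 0) := by
      simpa [sub_zero] using (hasDerivAt_iff_isLittleO.mp hg)
    rw [Asymptotics.isLittleO_iff] at h1
    have h2 := h1 hε
    rw [Metric.eventually_nhds_iff] at h2
    obtain ⟨δ, hδ, hδ2⟩ := h2
    rw [Metric.eventually_nhds_iff]
    refine ⟨δ, hδ, fun {s} hs => ?_⟩
    simp only [Real.dist_eq, sub_zero] at hs hδ2
    have habs : ∀ u ∈ Set.uIcc (0:ℝ) s, |u| ≤ |s| := by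
      intro u hu
      rw [Set.mem_uIcc] at hu
      rcases hu with ⟨h1u, h2u⟩ | ⟨h1u, h2u⟩ <;> rw [abs_le] <;>
        constructor <;> nlinarith [abs_nonneg s, le_abs_self s, neg_abs_le s]
    have hbound : ∀ u ∈ Set.uIcc (0:ℝ) s, ‖g u - g 0 - a * u‖ ≤ ε * |s| := by
      intro u hu
      have h3 : |u| < δ := lt_of_le_of_lt (habs u hu) hs
      have h4 := hδ2 h3
      simp only [real_smul] at h4
      calc ‖g u - g 0 - a * u‖ = ‖g u - g 0 - ↑u * a‖ := by ring_nf
        _ ≤ ε * ‖u‖ := h4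
        _ ≤ ε * |s| := by
            have := habs u hu
            simp only [Real.norm_eq_abs]
            nlinarith
    have := (convex_uIcc (0:ℝ) s).norm_image_sub_le_of_norm_hasDerivWithin_le
      (f := φ) (f' := fun u => g u - g 0 - a * u)
      (fun u _ => (hφd u).hasDerivWithinAt) hbound
      (Set.left_mem_uIcc) (Set.right_mem_uIcc)
    have hφ0 : φ 0 = 0 := by simp [hφ]
    rw [hφ0, sub_zero, Real.norm_eq_abs, sub_zero] at this
    calc ‖φ s‖ ≤ ε * |s| * |s| := this
      _ = ε * ‖s ^ 2‖ := by rw [Real.norm_eq_abs, _root_.abs_pow]; ring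
  have key2 : (fun s : ℝ => φ s) =o[nhds 0] (fun s : ℝ => (s : ℂ) ^ 2) :=
    key.trans_isBigO (Asymptotics.isBigO_of_le _ (fun x => by
      simp [Real.norm_eq_abs, norm_pow, _root_.abs_pow, map_pow,
        Complex.norm_real]))
  have h0 : Tendsto (fun s : ℝ => φ s / (s : ℂ) ^ 2) (nhdsWithin 0 {(0:ℝ)}ᶜ) (nhds 0) :=
    key2.tendsto_div_nhds_zero.mono_left nhdsWithin_le_nhds
  have h1 : Tendsto (fun s : ℝ => φ s / (s : ℂ) ^ 2 + a / 2) (nhdsWithin 0 {(0:ℝ)}ᶜ)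
      (nhds (a / 2)) := by
    simpa using h0.add (tendsto_const_nhds (x := a / 2))
  refine h1.congr' ?_
  filter_upwards [self_mem_nhdsWithin] with s hs
  have hs' : (s : ℂ) ≠ 0 := by
    simpa using Complex.ofReal_ne_zero.mpr hs
  have hs2 : ((s : ℂ)) ^ 2 ≠ 0 := pow_ne_zero 2 hs'
  field_simp [hφ]
  ring

lemma gts_cpow_deriv_p (lp : ℝ) (c : ℂ) (s : ℝ) (hlp : 0 < lp) :
    HasDerivAt (fun s : ℝ => ((lp:ℂ) - Complex.I * s) ^ c)
      (c * ((lp:ℂ) - Complex.I * s) ^ (c - 1) * (-Complex.I)) s := by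
  have hu : HasDerivAt (fun z : ℂ => (lp:ℂ) - Complex.I * z) (-Complex.I) ((s:ℝ):ℂ) := by
    simpa using ((hasDerivAt_id ((s:ℝ):ℂ)).const_mul Complex.I).const_sub ((lp:ℝ):ℂ)
  have hc := hu.cpow_const (c := c)
    (by rw [Complex.mem_slitPlane_iff]; left; simp [hlp])
  exact hc.comp_ofReal

lemma gts_cpow_deriv_m (lm : ℝ) (c : ℂ) (s : ℝ) (hlm : 0 < lm) :
    HasDerivAt (fun s : ℝ => ((lm:ℂ) + Complex.I * s) ^ c)
      (c * ((lm:ℂ) + Complex.I * s) ^ (c - 1) * Complex.I) s := by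
  have hu : HasDerivAt (fun z : ℂ => (lm:ℂ) + Complex.I * z) (Complex.I) ((s:ℝ):ℂ) := by
    simpa using ((hasDerivAt_id ((s:ℝ):ℂ)).const_mul Complex.I).const_add ((lm:ℝ):ℂ)
  have hc := hu.cpow_const (c := c)
    (by rw [Complex.mem_slitPlane_iff]; left; simp [hlm])
  exact hc.comp_ofReal

theorem gts_asymptotic_normality (μ βp βm αp αm lp lm : ℝ)
    (hβp0 : 0 < βp) (hβp1 : βp < 1) (hβm0 : 0 < βm) (hβm1 : βm < 1)
    (hαp : 0 ≤ αp) (hαm : 0 ≤ αm) (hα : 0 < αp + αm) (hlp : 0 < lp) (hlm : 0 < lm)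
    (Ψ : ℝ → ℂ)
    (hΨ : ∀ ξ : ℝ, Ψ ξ = Complex.I * μ * ξ
        + αp * Real.Gamma (-βp)
            * (((lp : ℂ) - Complex.I * ξ) ^ (βp : ℂ) - (lp : ℂ) ^ (βp : ℂ))
        + αm * Real.Gamma (-βm)
            * (((lm : ℂ) + Complex.I * ξ) ^ (βm : ℂ) - (lm : ℂ) ^ (βm : ℂ)))
    (κ₁ κ₂ : ℝ)
    (hκ₁ : κ₁ = μ + αp * Real.Gamma (1 - βp) / lp ^ (1 - βp)
        - αm * Real.Gamma (1 - βm) / lm ^ (1 - βm))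
    (hκ₂ : κ₂ = αp * Real.Gamma (2 - βp) / lp ^ (2 - βp)
        + αm * Real.Gamma (2 - βm) / lm ^ (2 - βm))
    (ξ : ℝ) :
    0 < κ₂ ∧
      Filter.Tendsto
        (fun t : ℝ => (t : ℂ) * Ψ (ξ / Real.sqrt (t * κ₂))
            - Complex.I * t * κ₁ * ξ / Real.sqrt (t * κ₂))
        Filter.atTop (nhds (-(ξ : ℂ) ^ 2 / 2)) ∧
      Filter.Tendsto
        (fun t : ℝ => Complex.exp ((t : ℂ) * Ψ (ξ / Real.sqrt (t * κ₂))
            - Complex.I * t * κ₁ * ξ / Real.sqrt (t * κ₂)))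
        Filter.atTop (nhds (Complex.exp (-(ξ : ℂ) ^ 2 / 2))) := by
  -- Gamma identities
  have hΓ1p : Real.Gamma (1 - βp) = -βp * Real.Gamma (-βp) := by
    rw [show (1:ℝ) - βp = -βp + 1 by ring, Real.Gamma_add_one (by linarith)]
  have hΓ1m : Real.Gamma (1 - βm) = -βm * Real.Gamma (-βm) := by
    rw [show (1:ℝ) - βm = -βm + 1 by ring, Real.Gamma_add_one (by linarith)]
  have hΓ2p : Real.Gamma (2 - βp) = βp * (βp - 1) * Real.Gamma (-βp) := by
    rw [show (2:ℝ) - βp = (1 - βp) + 1 by ring, Real.Gamma_add_one (by linarith), hΓ1p]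
    ring
  have hΓ2m : Real.Gamma (2 - βm) = βm * (βm - 1) * Real.Gamma (-βm) := by
    rw [show (2:ℝ) - βm = (1 - βm) + 1 by ring, Real.Gamma_add_one (by linarith), hΓ1m]
    ring
  -- positivity of κ₂
  have hΓ2p_pos : 0 < Real.Gamma (2 - βp) := Real.Gamma_pos_of_pos (by linarith)
  have hΓ2m_pos : 0 < Real.Gamma (2 - βm) := Real.Gamma_pos_of_pos (by linarith)
  have hlp2 : 0 < lp ^ (2 - βp) := Real.rpow_pos_of_pos hlp _
  have hlm2 : 0 < lm ^ (2 - βm) := Real.rpow_pos_of_pos hlm _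
  have hκ₂pos : 0 < κ₂ := by
    have hor : 0 < αp ∨ 0 < αm := by
      by_contra h
      push_neg at h
      linarith [h.1, h.2]
    rw [hκ₂]
    rcases hor with h | h
    · exact add_pos_of_pos_of_nonneg (div_pos (mul_pos h hΓ2p_pos) hlp2)
        (div_nonneg (mul_nonneg hαm hΓ2m_pos.le) hlm2.le)
    · exact add_pos_of_nonneg_of_pos
        (div_nonneg (mul_nonneg hαp hΓ2p_pos.le) hlp2.le)
        (div_pos (mul_pos h hΓ2m_pos) hlm2)
  -- rewritten cumulants
  have hκ₁' : κ₁ = μ - αp * Real.Gamma (-βp) * βp * lp ^ (βp - 1)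
      + αm * Real.Gamma (-βm) * βm * lm ^ (βm - 1) := by
    rw [hκ₁, hΓ1p, hΓ1m, show βp - 1 = -(1 - βp) by ring, Real.rpow_neg hlp.le,
      show βm - 1 = -(1 - βm) by ring, Real.rpow_neg hlm.le]
    ring
  have hκ₂' : κ₂ = αp * Real.Gamma (-βp) * (βp * (βp - 1)) * lp ^ (βp - 2)
      + αm * Real.Gamma (-βm) * (βm * (βm - 1)) * lm ^ (βm - 2) := by
    rw [hκ₂, hΓ2p, hΓ2m, show βp - 2 = -(2 - βp) by ring, Real.rpow_neg hlp.le,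
      show βm - 2 = -(2 - βm) by ring, Real.rpow_neg hlm.le]
    ring
  -- the derivative function
  set g : ℝ → ℂ := fun s =>
    Complex.I * (μ:ℂ)
      + (αp:ℂ) * (Real.Gamma (-βp) : ℂ)
        * ((βp:ℂ) * ((lp:ℂ) - Complex.I * s) ^ ((βp:ℂ) - 1) * (-Complex.I))
      + (αm:ℂ) * (Real.Gamma (-βm) : ℂ)
        * ((βm:ℂ) * ((lm:ℂ) + Complex.I * s) ^ ((βm:ℂ) - 1) * Complex.I) with hg_def
  have hP : ∀ s : ℝ, HasDerivAt Ψ (g s) s := by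
    intro s
    rw [funext hΨ]
    have hμd : HasDerivAt (fun ξ : ℝ => Complex.I * (μ:ℂ) * (ξ:ℂ)) (Complex.I * (μ:ℂ)) s := by
      simpa using (Complex.ofRealCLM.hasDerivAt (x := s)).const_mul (Complex.I * (μ:ℂ))
    have hp_d := ((gts_cpow_deriv_p lp (βp:ℂ) s hlp).sub_const
      ((lp:ℂ) ^ (βp:ℂ))).const_mul ((αp:ℂ) * (Real.Gamma (-βp) : ℂ))
    have hm_d := ((gts_cpow_deriv_m lm (βm:ℂ) s hlm).sub_const
      ((lm:ℂ) ^ (βm:ℂ))).const_mul ((αm:ℂ) * (Real.Gamma (-βm) : ℂ))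
    exact (hμd.add hp_d).add hm_d
  -- derivative of g at 0 is -κ₂
  have hgd : HasDerivAt g (-(κ₂:ℂ)) 0 := by
    rw [hg_def]
    have hp1 := gts_cpow_deriv_p lp ((βp:ℂ) - 1) 0 hlp
    have hm1 := gts_cpow_deriv_m lm ((βm:ℂ) - 1) 0 hlm
    have hp2 := ((hp1.const_mul (βp:ℂ)).mul_const (-Complex.I)).const_mul
      ((αp:ℂ) * (Real.Gamma (-βp) : ℂ))
    have hm2 := ((hm1.const_mul (βm:ℂ)).mul_const (Complex.I)).const_mul
      ((αm:ℂ) * (Real.Gamma (-βm) : ℂ))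
    have htot := ((hasDerivAt_const (0:ℝ) (Complex.I * (μ:ℂ))).add hp2).add hm2
    refine htot.congr_deriv (Eq.symm ?_)
    rw [show ((lp:ℂ) - Complex.I * ((0:ℝ):ℂ)) = (lp:ℂ) by norm_num,
      show ((lm:ℂ) + Complex.I * ((0:ℝ):ℂ)) = (lm:ℂ) by norm_num,
      show (βp:ℂ) - 1 - 1 = ((βp - 2 : ℝ):ℂ) by push_cast; ring,
      show (βm:ℂ) - 1 - 1 = ((βm - 2 : ℝ):ℂ) by push_cast; ring,
      ← Complex.ofReal_cpow hlp.le, ← Complex.ofReal_cpow hlm.le, hκ₂']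
    push_cast
    linear_combination (-( (αp:ℂ) * (Real.Gamma (-βp) : ℂ) * (βp:ℂ) * ((βp:ℂ) - 1)
          * ((lp ^ (βp - 2) : ℝ) : ℂ)
        + (αm:ℂ) * (Real.Gamma (-βm) : ℂ) * (βm:ℂ) * ((βm:ℂ) - 1)
          * ((lm ^ (βm - 2) : ℝ) : ℂ) )) * Complex.I_sq
  -- g 0 = I κ₁
  have hg0 : g 0 = Complex.I * (κ₁:ℂ) := by
    rw [hg_def]
    simp only []
    rw [show ((lp:ℂ) - Complex.I * ((0:ℝ):ℂ)) = (lp:ℂ) by norm_num,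
      show ((lm:ℂ) + Complex.I * ((0:ℝ):ℂ)) = (lm:ℂ) by norm_num,
      show (βp:ℂ) - 1 = ((βp - 1 : ℝ):ℂ) by push_cast; ring,
      show (βm:ℂ) - 1 = ((βm - 1 : ℝ):ℂ) by push_cast; ring,
      ← Complex.ofReal_cpow hlp.le, ← Complex.ofReal_cpow hlm.le, hκ₁']
    push_cast
    ring
  have hΨ0 : Ψ 0 = 0 := by
    rw [hΨ]
    simp
  have hT := gts_taylor2 Ψ g (-(κ₂:ℂ)) hP hgd
  simp only [hΨ0, hg0, sub_zero] at hT
  have hmain : Filter.Tendsto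
      (fun t : ℝ => (t : ℂ) * Ψ (ξ / Real.sqrt (t * κ₂))
          - Complex.I * t * κ₁ * ξ / Real.sqrt (t * κ₂))
      Filter.atTop (nhds (-(ξ : ℂ) ^ 2 / 2)) := by
    by_cases hξ : ξ = 0
    · subst hξ
      have heq : (fun t : ℝ => (t : ℂ) * Ψ ((0:ℝ) / Real.sqrt (t * κ₂))
          - Complex.I * t * κ₁ * ((0:ℝ):ℂ) / Real.sqrt (t * κ₂)) = fun _ => 0 := by
        funext t
        simp [hΨ0]
      rw [heq]
      norm_num
    · -- ξ ≠ 0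
      have hsq : Filter.Tendsto (fun t : ℝ => Real.sqrt (t * κ₂)) atTop atTop := by
        have := (tendsto_rpow_atTop (by norm_num : (0:ℝ) < 1/2)).comp
          (Filter.tendsto_id.atTop_mul_const hκ₂pos)
        exact this.congr (fun t => (Real.sqrt_eq_rpow _).symm)
      have hslim : Filter.Tendsto (fun t : ℝ => ξ / Real.sqrt (t * κ₂)) atTop
          (nhdsWithin 0 {(0:ℝ)}ᶜ) := by
        rw [tendsto_nhdsWithin_iff]
        constructor
        · exact Filter.Tendsto.div_atTop tendsto_const_nhds hsq
        · filter_upwards [Filter.eventually_gt_atTop 0] with t ht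
          exact div_ne_zero hξ (Real.sqrt_pos.mpr (mul_pos ht hκ₂pos)).ne'
      have hmul : Filter.Tendsto
          (fun t : ℝ => ((ξ ^ 2 / κ₂ : ℝ) : ℂ)
            * ((Ψ (ξ / Real.sqrt (t * κ₂))
                - Complex.I * (κ₁:ℂ) * ((ξ / Real.sqrt (t * κ₂) : ℝ) : ℂ))
              / ((ξ / Real.sqrt (t * κ₂) : ℝ) : ℂ) ^ 2))
          atTop (nhds (((ξ ^ 2 / κ₂ : ℝ) : ℂ) * (-(κ₂:ℂ) / 2))) :=
        (hT.comp hslim).const_mul _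
      have hval : ((ξ ^ 2 / κ₂ : ℝ) : ℂ) * (-(κ₂:ℂ) / 2) = -(ξ : ℂ) ^ 2 / 2 := by
        have hκne : ((κ₂:ℝ):ℂ) ≠ 0 := Complex.ofReal_ne_zero.mpr hκ₂pos.ne'
        push_cast
        field_simp
      rw [hval] at hmul
      refine hmul.congr' ?_
      filter_upwards [Filter.eventually_gt_atTop 0] with t ht
      have hrpos : 0 < Real.sqrt (t * κ₂) := Real.sqrt_pos.mpr (mul_pos ht hκ₂pos)
      have hrc : ((Real.sqrt (t * κ₂) : ℝ) : ℂ) ^ 2 = (t:ℂ) * (κ₂:ℂ) := by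
        rw [← Complex.ofReal_pow, Real.sq_sqrt (mul_pos ht hκ₂pos).le, Complex.ofReal_mul]
      have hκne : ((κ₂:ℝ):ℂ) ≠ 0 := Complex.ofReal_ne_zero.mpr hκ₂pos.ne'
      have htc : (t:ℂ) = ((Real.sqrt (t * κ₂) : ℝ) : ℂ) ^ 2 / (κ₂:ℂ) := by
        rw [hrc]
        field_simp
      rw [htc]
      have hrne : ((Real.sqrt (t * κ₂) : ℝ) : ℂ) ≠ 0 := Complex.ofReal_ne_zero.mpr hrpos.ne'
      have hξne : ((ξ:ℝ):ℂ) ≠ 0 := Complex.ofReal_ne_zero.mpr hξ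
      simp only [Complex.ofReal_div, Complex.ofReal_pow]
      field_simp
  exact ⟨hκ₂pos, hmain, hmain.cexp⟩
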